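/- Suppose R: [0,1] × ℝ × ℝ → ℝ, written R(q, v, w), is continuously differentiable, and for every twice-differentiable weakly decreasing v̂: [0,1] → ℝ₊, the map q ↦ R(q, v̂(q), v̂'(q)) is weakly decreasing. Then ∂R/∂w ≡ 0, ∂R/∂q ≤ 0, and ∂R/∂v ≥ 0 at every point attainable by such v̂. -/

import Mathlib

open Set Filter Real Topology

private lemma deriv_nonpos_of_antitoneOn' {f : ℝ → ℝ} {a b q d : ℝ} (hab : a < b)
    (hq : q ∈ Set.Icc a b) (hf : AntitoneOn f (Set.Icc a b)) (hd : HasDerivAt f d q) :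
    d ≤ 0 := by
  have hslope := hasDerivAt_iff_tendsto_slope.mp hd
  rcases lt_or_eq_of_le hq.2 with hqb | hqb
  · have h1 : Tendsto (slope f q) (𝓝[Set.Ioc q b] q) (𝓝 d) :=
      hslope.mono_left (nhdsWithin_mono _ (fun y hy => (ne_of_gt hy.1)))
    haveI : (𝓝[Set.Ioc q b] q).NeBot := by
      rw [nhdsWithin_Ioc_eq_nhdsGT hqb]; infer_instance
    refine le_of_tendsto h1 ?_
    filter_upwards [self_mem_nhdsWithin] with y hy
    have hfy : f y ≤ f q := hf hq ⟨le_trans hq.1 hy.1.le, hy.2⟩ hy.1.le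
    rw [slope_def_field]
    exact div_nonpos_of_nonpos_of_nonneg (by linarith) (by linarith [hy.1])
  · subst hqb
    have h1 : Tendsto (slope f q) (𝓝[Set.Ico a q] q) (𝓝 d) :=
      hslope.mono_left (nhdsWithin_mono _ (fun y hy => (ne_of_lt hy.2)))
    haveI : (𝓝[Set.Ico a q] q).NeBot := by
      rw [nhdsWithin_Ico_eq_nhdsLT hab]; infer_instance
    refine le_of_tendsto h1 ?_
    filter_upwards [self_mem_nhdsWithin] with y hy
    have hfy : f q ≤ f y := hf ⟨hy.1, hy.2.le⟩ hq hy.2.le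
    rw [slope_def_field]
    exact div_nonpos_of_nonneg_of_nonpos (by linarith) (by linarith [hy.2])

private lemma deriv_eq_zero_of_eqOn_zero' {f : ℝ → ℝ} {a b q d : ℝ} (hab : a < b)
    (hq : q ∈ Set.Icc a b) (h0 : ∀ x ∈ Set.Icc a b, f x = 0) (hd : HasDerivAt f d q) :
    d = 0 := by
  have h1 : AntitoneOn f (Set.Icc a b) := fun x hx y hy _ => by rw [h0 x hx, h0 y hy]
  have h2 : AntitoneOn (fun x => -f x) (Set.Icc a b) := fun x hx y hy _ => by
    simp [h0 x hx, h0 y hy]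
  have e1 := deriv_nonpos_of_antitoneOn' hab hq h1 hd
  have e2 := deriv_nonpos_of_antitoneOn' hab hq h2 hd.neg
  linarith

private lemma forceC_zero {v w A B C : ℝ} (hv : 0 < v) (hw : w < 0)
    (h : ∀ β : ℝ, β ≠ 0 → A + w * B + (w * w / v + w * β) * C ≤ 0) : C = 0 := by
  by_contra hC
  have hwC : w * C ≠ 0 := mul_ne_zero (ne_of_lt hw) hC
  obtain ⟨K, hK⟩ : ∃ K, K = A + w * B + w * w / v * C := ⟨_, rfl⟩
  have hβ0 : (|K| + 1) / (w * C) ≠ 0 := div_ne_zero (by positivity) hwC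
  have hwβC : w * ((|K| + 1) / (w * C)) * C = |K| + 1 := by
    field_simp
    ring_nf
    exact mul_inv_cancel₀ (ne_of_lt hw)
  have hthis := h _ hβ0
  have habs : -K ≤ |K| := neg_le_abs K
  have hexpand : (w * w / v + w * ((|K| + 1) / (w * C))) * C
      = w * w / v * C + w * ((|K| + 1) / (w * C)) * C := by ring
  rw [hexpand, hwβC] at hthis
  linarith

/-- sign conditions on the partial derivatives of the virtual
value functional `R (q, v̂ q, v̂' q)` of a truthful virtual-efficient mechanism
family. -/
theorem virtual_value_functional_signs (R : ℝ → ℝ → ℝ → ℝ)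
    (hR : ContDiff ℝ 1 (fun p : ℝ × ℝ × ℝ => R p.1 p.2.1 p.2.2))
    (hmono : ∀ vhat : ℝ → ℝ, ContDiff ℝ 2 vhat → Antitone vhat →
      (∀ q, 0 ≤ vhat q) →
      AntitoneOn (fun q => R q (vhat q) (deriv vhat q)) (Set.Icc (0:ℝ) 1)) :
    ∀ vhat : ℝ → ℝ, ContDiff ℝ 2 vhat → Antitone vhat → (∀ q, 0 ≤ vhat q) →
      ∀ q ∈ Set.Icc (0:ℝ) 1,
        deriv (fun w => R q (vhat q) w) (deriv vhat q) = 0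
        ∧ deriv (fun s => R s (vhat q) (deriv vhat q)) q ≤ 0
        ∧ 0 ≤ deriv (fun u => R q u (deriv vhat q)) (vhat q) := by
  set U : ℝ × ℝ × ℝ → ℝ := fun p => R p.1 p.2.1 p.2.2 with hUdef
  have hRd : Differentiable ℝ U := hR.differentiable one_ne_zero
  set L : ℝ × ℝ × ℝ → (ℝ × ℝ × ℝ →L[ℝ] ℝ) := fun p => fderiv ℝ U p with hLdef
  have hLcont : Continuous L := hR.continuous_fderiv one_ne_zero
  -- slice derivatives
  have sliceq : ∀ q v w : ℝ, HasDerivAt (fun s => R s v w) (L (q, v, w) (1, 0, 0)) q := by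
    intro q v w
    have hγ : HasDerivAt (fun s : ℝ => (s, v, w)) ((1 : ℝ), (0 : ℝ), (0 : ℝ)) q :=
      HasDerivAt.prodMk (hasDerivAt_id q) (HasDerivAt.prodMk (hasDerivAt_const q v) (hasDerivAt_const q w))
    exact (hRd (q, v, w)).hasFDerivAt.comp_hasDerivAt q hγ
  have slicev : ∀ q v w : ℝ, HasDerivAt (fun u => R q u w) (L (q, v, w) (0, 1, 0)) v := by
    intro q v w
    have hγ : HasDerivAt (fun u : ℝ => (q, u, w)) ((0 : ℝ), (1 : ℝ), (0 : ℝ)) v :=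
      HasDerivAt.prodMk (hasDerivAt_const v q) (HasDerivAt.prodMk (hasDerivAt_id v) (hasDerivAt_const v w))
    exact (hRd (q, v, w)).hasFDerivAt.comp_hasDerivAt v hγ
  have slicew : ∀ q v w : ℝ, HasDerivAt (fun x => R q v x) (L (q, v, w) (0, 0, 1)) w := by
    intro q v w
    have hγ : HasDerivAt (fun x : ℝ => (q, v, x)) ((0 : ℝ), (0 : ℝ), (1 : ℝ)) w :=
      HasDerivAt.prodMk (hasDerivAt_const w q) (HasDerivAt.prodMk (hasDerivAt_const w v) (hasDerivAt_id w))
    exact (hRd (q, v, w)).hasFDerivAt.comp_hasDerivAt w hγ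
  -- linearity expansion
  have expand : ∀ (p : ℝ × ℝ × ℝ) (a b c : ℝ),
      L p (a, b, c) = a * L p (1, 0, 0) + b * L p (0, 1, 0) + c * L p (0, 0, 1) := by
    intro p a b c
    have h : ((a, b, c) : ℝ × ℝ × ℝ)
        = a • ((1:ℝ), (0:ℝ), (0:ℝ)) + b • ((0:ℝ), (1:ℝ), (0:ℝ)) + c • ((0:ℝ), (0:ℝ), (1:ℝ)) := by
      simp [Prod.ext_iff]
    rw [h, map_add, map_add, map_smul, map_smul, map_smul, smul_eq_mul, smul_eq_mul, smul_eq_mul]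
  -- chain rule
  have chain : ∀ (g : ℝ → ℝ) (q g1 g2 : ℝ), HasDerivAt g g1 q →
      HasDerivAt (deriv g) g2 q →
      HasDerivAt (fun s => R s (g s) (deriv g s))
        (L (q, g q, g1) (1,0,0) + g1 * L (q, g q, g1) (0,1,0) + g2 * L (q, g q, g1) (0,0,1)) q := by
    intro g q g1 g2 hg1 hg2
    have hγ : HasDerivAt (fun s : ℝ => (s, g s, deriv g s)) ((1 : ℝ), g1, g2) q :=
      HasDerivAt.prodMk (hasDerivAt_id q) (hg1.prodMk hg2)
    have h := (hRd (q, g q, deriv g q)).hasFDerivAt.comp_hasDerivAt q hγ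
    rw [hg1.deriv] at h
    have := expand (q, g q, g1) 1 g1 g2
    rw [this, one_mul] at h
    exact h
  -- key inequality from the exponential construction
  have keyA : ∀ q₀ ∈ Set.Icc (0:ℝ) 1, ∀ v w β : ℝ, 0 < v → w < 0 → β ≠ 0 →
      L (q₀, v, w) (1,0,0) + w * L (q₀, v, w) (0,1,0)
        + (w * w / v + w * β) * L (q₀, v, w) (0,0,1) ≤ 0 := by
    intro q₀ hq₀ v w β hv hw hβ
    have hv0 : v ≠ 0 := ne_of_gt hv
    set g : ℝ → ℝ := fun x => v * Real.exp ((w / v / β) * (Real.exp (β * (x - q₀)) - 1)) with hgdef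
    have hg1 : ∀ x, HasDerivAt g (g x * (w / v * Real.exp (β * (x - q₀)))) x := by
      intro x
      have h1 : HasDerivAt (fun x : ℝ => β * (x - q₀)) β x := by
        simpa using ((hasDerivAt_id x).sub_const q₀).const_mul β
      have h2 := (h1.exp.sub_const 1).const_mul (w / v / β)
      have h3 := h2.exp.const_mul v
      refine h3.congr_deriv ?_
      symm
      rw [hgdef]
      field_simp
    have hgc : ContDiff ℝ 2 g := by
      apply ContDiff.mul contDiff_const
      apply ContDiff.exp
      apply ContDiff.mul contDiff_const
      apply ContDiff.sub _ contDiff_const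
      apply ContDiff.exp
      exact contDiff_const.mul (contDiff_id.sub contDiff_const)
    have hgpos : ∀ x, 0 < g x := fun x => by positivity
    have hdg : deriv g = fun x => g x * (w / v * Real.exp (β * (x - q₀))) :=
      funext fun x => (hg1 x).deriv
    have hganti : Antitone g := by
      apply antitone_of_deriv_nonpos (hgc.differentiable (by norm_num))
      intro x
      rw [hdg]
      have : w / v * Real.exp (β * (x - q₀)) ≤ 0 :=
        mul_nonpos_of_nonpos_of_nonneg (le_of_lt (div_neg_of_neg_of_pos hw hv))
          (Real.exp_pos _).le
      exact mul_nonpos_of_nonneg_of_nonpos (hgpos x).le this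
    have hgq0 : g q₀ = v := by simp [hgdef]
    have hval : g q₀ * (w / v * Real.exp (β * (q₀ - q₀))) = w := by
      rw [hgq0, sub_self, mul_zero, Real.exp_zero, mul_one, mul_comm, div_mul_cancel₀ w hv0]
    have hg2 : HasDerivAt (deriv g) (w * w / v + w * β) q₀ := by
      rw [hdg]
      have h1 : HasDerivAt (fun x : ℝ => β * (x - q₀)) β q₀ := by
        simpa using ((hasDerivAt_id q₀).sub_const q₀).const_mul β
      have h2 := (h1.exp.const_mul (w / v))
      have h3 := (hg1 q₀).mul h2
      refine h3.congr_deriv ?_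
      symm
      rw [hgq0, sub_self, mul_zero, Real.exp_zero]
      field_simp
    have hg1' : HasDerivAt g w q₀ := hval ▸ hg1 q₀
    have hF := chain g q₀ w (w * w / v + w * β) hg1' hg2
    rw [hgq0] at hF
    exact deriv_nonpos_of_antitoneOn' (by norm_num) hq₀
      (hmono g hgc hganti (fun x => (hgpos x).le)) hF
  -- ∂w = 0 on the open region
  have keyW : ∀ q₀ ∈ Set.Icc (0:ℝ) 1, ∀ v w : ℝ, 0 < v → w < 0 →
      L (q₀, v, w) (0,0,1) = 0 := by
    intro q₀ hq₀ v w hv hw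
    exact forceC_zero hv hw (fun β hβ => keyA q₀ hq₀ v w β hv hw hβ)
  -- continuity of the partials
  have contA : Continuous fun p : ℝ × ℝ × ℝ => L p (1,0,0) := hLcont.clm_apply continuous_const
  have contB : Continuous fun p : ℝ × ℝ × ℝ => L p (0,1,0) := hLcont.clm_apply continuous_const
  have contC : Continuous fun p : ℝ × ℝ × ℝ => L p (0,0,1) := hLcont.clm_apply continuous_const
  -- approximating sequence
  have hseq : ∀ (q₀ v w : ℝ), Tendsto (fun n : ℕ => ((q₀ : ℝ), v + 1 / (n + 1), w - 1 / (n + 1)))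
      atTop (𝓝 (q₀, v, w)) := by
    intro q₀ v w
    have h1 : Tendsto (fun n : ℕ => (1 : ℝ) / (n + 1)) atTop (𝓝 0) :=
      tendsto_one_div_add_atTop_nhds_zero_nat
    have hv : Tendsto (fun n : ℕ => v + 1 / (n + 1)) atTop (𝓝 v) := by
      simpa using tendsto_const_nhds.add h1
    have hw : Tendsto (fun n : ℕ => w - 1 / (n + 1)) atTop (𝓝 w) := by
      simpa using tendsto_const_nhds.sub h1
    exact tendsto_const_nhds.prodMk_nhds (hv.prodMk_nhds hw)
  -- closures
  have keyW' : ∀ q₀ ∈ Set.Icc (0:ℝ) 1, ∀ v w : ℝ, 0 ≤ v → w ≤ 0 →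
      L (q₀, v, w) (0,0,1) = 0 := by
    intro q₀ hq₀ v w hv hw
    have h1 : Tendsto (fun n : ℕ => L (q₀, v + 1 / (n + 1), w - 1 / (n + 1)) (0,0,1))
        atTop (𝓝 (L (q₀, v, w) (0,0,1))) := (contC.tendsto _).comp (hseq q₀ v w)
    have h2 : (fun n : ℕ => L (q₀, v + 1 / (n + 1), w - 1 / (n + 1)) (0,0,1))
        = fun _ : ℕ => (0 : ℝ) := by
      funext n
      have hn : (0:ℝ) < 1 / (n + 1) := by positivity
      exact keyW q₀ hq₀ _ _ (by linarith) (by linarith)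
    rw [h2] at h1
    exact tendsto_nhds_unique h1 tendsto_const_nhds
  have keyAB' : ∀ q₀ ∈ Set.Icc (0:ℝ) 1, ∀ v w : ℝ, 0 ≤ v → w ≤ 0 →
      L (q₀, v, w) (1,0,0) + w * L (q₀, v, w) (0,1,0) ≤ 0 := by
    intro q₀ hq₀ v w hv hw
    have h1 : Tendsto (fun n : ℕ => L (q₀, v + 1 / (n + 1), w - 1 / (n + 1)) (1,0,0)
          + (w - 1 / (n + 1)) * L (q₀, v + 1 / (n + 1), w - 1 / (n + 1)) (0,1,0))
        atTop (𝓝 (L (q₀, v, w) (1,0,0) + w * L (q₀, v, w) (0,1,0))) := by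
      have hA := (contA.tendsto _).comp (hseq q₀ v w)
      have hB := (contB.tendsto _).comp (hseq q₀ v w)
      have hw' : Tendsto (fun n : ℕ => w - 1 / (n + 1)) atTop (𝓝 w) := by
        simpa using (tendsto_const_nhds (x := w)).sub tendsto_one_div_add_atTop_nhds_zero_nat
      exact hA.add (hw'.mul hB)
    refine le_of_tendsto h1 (Filter.Eventually.of_forall fun n => ?_)
    have hn : (0:ℝ) < 1 / (n + 1) := by positivity
    have hv' : (0:ℝ) < v + 1 / (n + 1) := by linarith
    have hw' : w - 1 / (n + 1) < 0 := by linarith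
    have hC0 := keyW q₀ hq₀ _ _ hv' hw'
    have := keyA q₀ hq₀ _ _ 1 hv' hw' one_ne_zero
    rw [hC0] at this
    linarith
  -- constancy in w on the admissible region
  have hconst : ∀ q₀ ∈ Set.Icc (0:ℝ) 1, ∀ v : ℝ, 0 ≤ v → ∀ w ≤ (0:ℝ),
      R q₀ v w = R q₀ v 0 := by
    intro q₀ hq₀ v hv w hw
    rcases eq_or_lt_of_le hw with h | h
    · rw [h]
    · have hcc := constant_of_has_deriv_right_zero (f := fun x => R q₀ v x) (a := w) (b := 0)
        (fun x _ => ((slicew q₀ v x).continuousAt).continuousWithinAt)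
        (fun x hx => by
          have h0 := keyW' q₀ hq₀ v x hv hx.2.le
          have := (slicew q₀ v x)
          rw [h0] at this
          exact this.hasDerivWithinAt)
      exact (hcc 0 ⟨h.le, le_refl 0⟩).symm
  -- transfer of partials across w
  have htransA : ∀ q₀ ∈ Set.Icc (0:ℝ) 1, ∀ v : ℝ, 0 ≤ v → ∀ w ≤ (0:ℝ),
      L (q₀, v, w) (1,0,0) = L (q₀, v, 0) (1,0,0) := by
    intro q₀ hq₀ v hv w hw
    have hd : HasDerivAt (fun s => R s v w - R s v 0)
        (L (q₀, v, w) (1,0,0) - L (q₀, v, 0) (1,0,0)) q₀ :=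
      (sliceq q₀ v w).sub (sliceq q₀ v 0)
    have h0 : ∀ x ∈ Set.Icc (0:ℝ) 1, (fun s => R s v w - R s v 0) x = 0 := by
      intro x hx
      simp [hconst x hx v hv w hw]
    have := deriv_eq_zero_of_eqOn_zero' (by norm_num) hq₀ h0 hd
    linarith
  have htransB : ∀ q₀ ∈ Set.Icc (0:ℝ) 1, ∀ v : ℝ, 0 ≤ v → ∀ w ≤ (0:ℝ),
      L (q₀, v, w) (0,1,0) = L (q₀, v, 0) (0,1,0) := by
    intro q₀ hq₀ v hv w hw
    have hd : HasDerivAt (fun u => R q₀ u w - R q₀ u 0)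
        (L (q₀, v, w) (0,1,0) - L (q₀, v, 0) (0,1,0)) v :=
      (slicev q₀ v w).sub (slicev q₀ v 0)
    have h0 : ∀ x ∈ Set.Icc (0:ℝ) (v+1), (fun u => R q₀ u w - R q₀ u 0) x = 0 := by
      intro x hx
      simp [hconst q₀ hq₀ x hx.1 w hw]
    have := deriv_eq_zero_of_eqOn_zero' (show (0:ℝ) < v+1 by linarith)
      (⟨hv, by linarith⟩ : v ∈ Set.Icc (0:ℝ) (v+1)) h0 hd
    linarith
  -- conclusion
  intro vhat hv2 hanti hpos q₀ hq₀
  have hvd : HasDerivAt vhat (deriv vhat q₀) q₀ :=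
    (hv2.differentiable (by norm_num) q₀).hasDerivAt
  have hw0 : deriv vhat q₀ ≤ 0 :=
    deriv_nonpos_of_antitoneOn' (show q₀ - 1 < q₀ + 1 by linarith)
      (⟨by linarith, by linarith⟩ : q₀ ∈ Set.Icc (q₀-1) (q₀+1)) (hanti.antitoneOn _) hvd
  have hv0 : 0 ≤ vhat q₀ := hpos q₀
  refine ⟨?_, ?_, ?_⟩
  · rw [(slicew q₀ (vhat q₀) (deriv vhat q₀)).deriv]
    exact keyW' q₀ hq₀ _ _ hv0 hw0
  · rw [(sliceq q₀ (vhat q₀) (deriv vhat q₀)).deriv]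
    rw [htransA q₀ hq₀ _ hv0 _ hw0]
    have := keyAB' q₀ hq₀ (vhat q₀) 0 hv0 le_rfl
    linarith
  · rw [(slicev q₀ (vhat q₀) (deriv vhat q₀)).deriv]
    rw [htransB q₀ hq₀ _ hv0 _ hw0]
    by_contra hB
    push_neg at hB
    obtain ⟨A, hA⟩ : ∃ A, A = L (q₀, vhat q₀, 0) (1,0,0) := ⟨_, rfl⟩
    obtain ⟨B, hBdef⟩ : ∃ B, B = L (q₀, vhat q₀, 0) (0,1,0) := ⟨_, rfl⟩
    have hBneg : B < 0 := hBdef ▸ hB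
    have hwle : (|A|+1)/B ≤ 0 := le_of_lt (div_neg_of_pos_of_neg (by positivity) hBneg)
    have h1 := keyAB' q₀ hq₀ (vhat q₀) ((|A|+1)/B) hv0 hwle
    rw [htransA q₀ hq₀ _ hv0 _ hwle, htransB q₀ hq₀ _ hv0 _ hwle, ← hA, ← hBdef] at h1
    have h2 : (|A|+1)/B * B = |A|+1 := div_mul_cancel₀ _ (ne_of_lt hBneg)
    have habs : -A ≤ |A| := neg_le_abs A
    linarith
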